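/- For 0 < λ < 4 with θ = π - arccos((λ-2)/2) and θ ≠ lπ/(k+1) for all l = 1,…,k, the inverse R of the tridiagonal matrix Q_k(λ) exists and its entries are R_{ij} = [cos((k+1-|i-j|)θ) - cos((k+1-i-j)θ)] / [2 sin θ · sin((k+1)θ)] for 1 ≤ i,j ≤ k. -/

import Mathlib

open Real Matrix

/-- `Q_k(λ)`: `k×k` symmetric tridiagonal matrix with diagonal `λ-2` and off-diagonal `1`. -/
def Qmat (k : ℕ) (lam : ℝ) : Matrix (Fin k) (Fin k) ℝ :=
  fun i j => if i = j then lam - 2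
    else if i.val + 1 = j.val ∨ j.val + 1 = i.val then 1 else 0

lemma trig_rec (θ x : ℝ) : Real.sin (x - θ) + Real.sin (x + θ) = 2 * Real.cos θ * Real.sin x := by
  rw [Real.sin_sub, Real.sin_add]; ring

lemma trig_key (θ x y : ℝ) :
    Real.sin (x - θ) * Real.sin y - 2 * Real.cos θ * Real.sin x * Real.sin y
      + Real.sin x * Real.sin (y - θ) = -(Real.sin θ * Real.sin (x + y)) := by
  rw [Real.sin_sub, Real.sin_sub, Real.sin_add]; ring

lemma trig_cos (A B : ℝ) : Real.cos (A + B) - Real.cos (A - B) = -(2 * Real.sin A * Real.sin B) := by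
  rw [Real.cos_add, Real.cos_sub]; ring

lemma alg_off (c f0 f1 f2 S D : ℝ) (h : f0 + f2 = 2 * c * f1) :
    -(2 * c) * (-(f1 * S) / D) + (-(f0 * S) / D + -(f2 * S) / D) = 0 := by
  have e : -(2 * c) * (-(f1 * S) / D) + (-(f0 * S) / D + -(f2 * S) / D)
      = ((2 * c * f1 - (f0 + f2)) * S) / D := by ring
  rw [e, h]
  simp

lemma alg_off2 (c F g0 g1 g2 D : ℝ) (h : g0 + g2 = 2 * c * g1) :
    -(2 * c) * (-(F * g1) / D) + (-(F * g0) / D + -(F * g2) / D) = 0 := by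
  have e : -(2 * c) * (-(F * g1) / D) + (-(F * g0) / D + -(F * g2) / D)
      = ((2 * c * g1 - (g0 + g2)) * F) / D := by ring
  rw [e, h]
  simp

lemma alg_diag (c f0 f1 g1 g2 D : ℝ) (hD : D ≠ 0)
    (h : f0 * g1 - 2 * c * f1 * g1 + f1 * g2 = -D) :
    -(2 * c) * (-(f1 * g1) / D) + (-(f0 * g1) / D + -(f1 * g2) / D) = 1 := by
  have e : -(2 * c) * (-(f1 * g1) / D) + (-(f0 * g1) / D + -(f1 * g2) / D)
      = -(f0 * g1 - 2 * c * f1 * g1 + f1 * g2) / D := by ring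
  rw [e, h, neg_neg]
  exact div_self hD

lemma sum_ind {k : ℕ} (t : ℕ) (c : ℝ) :
    (∑ j : Fin k, if (j : ℕ) = t then c else 0) = if t < k then c else 0 := by
  split_ifs with h
  · rw [Finset.sum_eq_single (⟨t, h⟩ : Fin k)]
    · simp
    · intro j _ hj; rw [if_neg]; exact fun he => hj (Fin.ext he)
    · intro hj; exact absurd (Finset.mem_univ _) hj
  · apply Finset.sum_eq_zero; intro j _; rw [if_neg]; exact fun he => h (he ▸ j.isLt)

theorem stmt6 (k : ℕ) (hk : 3 ≤ k) (lam : ℝ) (h0 : 0 < lam) (h4 : lam < 4)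
    (θ : ℝ) (hθ : θ = Real.pi - Real.arccos ((lam - 2) / 2))
    (hres : ∀ l : ℕ, 1 ≤ l → l ≤ k → θ ≠ l * Real.pi / (k + 1)) :
    IsUnit (Qmat k lam).det ∧
    ∀ i j : Fin k,
      (Qmat k lam)⁻¹ i j =
        (Real.cos (((k : ℝ) + 1 - |((i.val : ℝ) + 1) - ((j.val : ℝ) + 1)|) * θ) -
          Real.cos (((k : ℝ) + 1 - ((i.val : ℝ) + 1) - ((j.val : ℝ) + 1)) * θ)) /
        (2 * Real.sin θ * Real.sin ((k + 1) * θ)) := by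
  have hθ0 : 0 < θ := by
    rw [hθ]
    have h1 : Real.arccos ((lam - 2) / 2) ≤ Real.pi := Real.arccos_le_pi _
    have h2 : Real.arccos ((lam - 2) / 2) ≠ Real.pi := by
      intro hc
      have := Real.arccos_eq_pi.mp hc
      linarith
    have := lt_of_le_of_ne h1 h2
    linarith
  have hθπ : θ < Real.pi := by
    rw [hθ]; have h1 : 0 < Real.arccos ((lam - 2) / 2) :=
      Real.arccos_pos.mpr (by linarith)
    linarith
  have hs : 0 < Real.sin θ := Real.sin_pos_of_pos_of_lt_pi hθ0 hθπ
  have hcos : lam - 2 = -(2 * Real.cos θ) := by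
    rw [hθ, Real.cos_pi_sub, Real.cos_arccos (by linarith) (by linarith)]; ring
  have hT : Real.sin (((k : ℝ) + 1) * θ) ≠ 0 := by
    intro h
    rw [Real.sin_eq_zero_iff] at h
    obtain ⟨n, hn⟩ := h
    have hπ := Real.pi_pos
    have hkθ : 0 < ((k : ℝ) + 1) * θ := by positivity
    have hkπ : ((k : ℝ) + 1) * θ < ((k : ℝ) + 1) * Real.pi := by
      apply mul_lt_mul_of_pos_left hθπ; positivity
    have hn0 : 0 < n := by
      by_contra hc
      push_neg at hc
      have : (n : ℝ) * Real.pi ≤ 0 := mul_nonpos_of_nonpos_of_nonneg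
        (by exact_mod_cast hc) (le_of_lt hπ)
      linarith
    have hnk : (n : ℝ) < (k : ℝ) + 1 := by
      have : (n : ℝ) * Real.pi < ((k : ℝ) + 1) * Real.pi := by linarith
      exact lt_of_mul_lt_mul_right (by linarith) (le_of_lt hπ)
    have hnZ : (n : ℤ) ≤ (k : ℤ) := by
      have : (n : ℤ) < (k : ℤ) + 1 := by exact_mod_cast hnk
      omega
    refine hres n.toNat (by omega) (by omega) ?_
    have hcast : ((n.toNat : ℕ) : ℝ) = (n : ℝ) := by
      have h' : (n.toNat : ℤ) = n := Int.toNat_of_nonneg (le_of_lt hn0)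
      exact_mod_cast congrArg (Int.cast : ℤ → ℝ) h'
    rw [hcast]
    field_simp
    linarith [hn]
  set D := Real.sin θ * Real.sin (((k : ℝ) + 1) * θ) with hDdef
  have hDne : D ≠ 0 := mul_ne_zero (ne_of_gt hs) hT
  set R : Matrix (Fin k) (Fin k) ℝ := fun i j =>
    -(Real.sin (((min (i.val + 1) (j.val + 1) : ℕ) : ℝ) * θ) *
      Real.sin (((k : ℝ) + 1 - ((max (i.val + 1) (j.val + 1) : ℕ) : ℝ)) * θ)) / D with hR
  have hQR : Qmat k lam * R = 1 := by
    ext i m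
    rw [Matrix.mul_apply, Matrix.one_apply]
    set G : ℕ → ℝ := fun n =>
      -(Real.sin (((min n (m.val + 1) : ℕ) : ℝ) * θ) *
        Real.sin (((k : ℝ) + 1 - ((max n (m.val + 1) : ℕ) : ℝ)) * θ)) / D with hG
    have hRG : ∀ j : Fin k, R j m = G (j.val + 1) := fun j => rfl
    have hsummand : ∀ j : Fin k, Qmat k lam i j * R j m =
        (if (j : ℕ) = i.val then (lam - 2) * G (i.val + 1) else 0) +
        ((if (j : ℕ) + 1 = i.val then G i.val else 0) +
        (if (j : ℕ) = i.val + 1 then G (i.val + 2) else 0)) := by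
      intro j
      rw [hRG]
      unfold Qmat
      by_cases h1 : i = j
      · subst h1
        rw [if_pos rfl, if_pos rfl, if_neg (by omega), if_neg (by omega)]
        ring
      · rw [if_neg h1]
        have h1v : i.val ≠ j.val := fun h => h1 (Fin.ext h)
        by_cases h2 : i.val + 1 = j.val
        · rw [if_pos (Or.inl h2), if_neg (by omega), if_neg (by omega), if_pos (by omega)]
          rw [show j.val + 1 = i.val + 2 by omega]; ring
        · by_cases h3 : j.val + 1 = i.val
          · rw [if_pos (Or.inr h3), if_neg (by omega), if_pos h3, if_neg (by omega)]
            rw [h3]; ring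
          · rw [if_neg (by tauto), if_neg (by omega), if_neg (by omega), if_neg (by omega)]
            ring
    rw [Finset.sum_congr rfl (fun j _ => hsummand j), Finset.sum_add_distrib,
      Finset.sum_add_distrib, sum_ind, sum_ind]
    have hmid : (∑ j : Fin k, if (j : ℕ) + 1 = i.val then G i.val else 0) = G i.val := by
      rcases Nat.eq_zero_or_pos i.val with h | h
      · rw [h]
        have hG0 : G 0 = 0 := by
          simp only [hG]
          rw [min_eq_left (Nat.zero_le _)]
          norm_num
        rw [hG0]
        exact Finset.sum_eq_zero fun j _ => by rw [if_neg (by omega)]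
      · have hc : ∀ j : Fin k, (if (j : ℕ) + 1 = i.val then G i.val else 0)
            = (if (j : ℕ) = i.val - 1 then G i.val else 0) := by
          intro j; congr 1; simp only [eq_iff_iff]; omega
        rw [Finset.sum_congr rfl (fun j _ => hc j), sum_ind, if_pos (by omega)]
    rw [hmid, if_pos i.isLt]
    have hthird : (if i.val + 1 < k then G (i.val + 2) else 0) = G (i.val + 2) := by
      split_ifs with h
      · rfl
      · have hik : i.val + 2 = k + 1 := by omega
        rw [hik]
        have hGk : G (k + 1) = 0 := by
          simp only [hG]
          rw [max_eq_left (by omega : m.val + 1 ≤ k + 1)]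
          push_cast
          norm_num
        rw [hGk]
    rw [hthird]
    -- main identity
    rcases lt_trichotomy i.val m.val with hab | hab | hab
    · rw [if_neg (show ¬ i = m by intro h; subst h; omega)]
      simp only [hG]
      rw [min_eq_left (by omega : i.val ≤ m.val + 1),
        min_eq_left (by omega : i.val + 1 ≤ m.val + 1),
        min_eq_left (by omega : i.val + 2 ≤ m.val + 1),
        max_eq_right (by omega : i.val ≤ m.val + 1),
        max_eq_right (by omega : i.val + 1 ≤ m.val + 1),
        max_eq_right (by omega : i.val + 2 ≤ m.val + 1)]
      push_cast
      rw [hcos]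
      rw [show ((i.val : ℝ)) * θ = ((i.val : ℝ) + 1) * θ - θ by ring,
        show ((i.val : ℝ) + 2) * θ = ((i.val : ℝ) + 1) * θ + θ by ring]
      exact alg_off _ _ _ _ _ _ (trig_rec θ (((i.val : ℝ) + 1) * θ))
    · rw [if_pos (Fin.ext hab)]
      simp only [hG]
      rw [min_eq_left (by omega : i.val ≤ m.val + 1),
        min_eq_right (by omega : m.val + 1 ≤ i.val + 1),
        min_eq_right (by omega : m.val + 1 ≤ i.val + 2),
        max_eq_right (by omega : i.val ≤ m.val + 1),
        max_eq_left (by omega : m.val + 1 ≤ i.val + 1),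
        max_eq_left (by omega : m.val + 1 ≤ i.val + 2)]
      push_cast
      rw [hcos, hab]
      rw [show ((m.val : ℝ)) * θ = ((m.val : ℝ) + 1) * θ - θ by ring,
        show ((k : ℝ) + 1 - ((m.val : ℝ) + 2)) * θ
          = ((k : ℝ) + 1 - ((m.val : ℝ) + 1)) * θ - θ by ring]
      have hkey := trig_key θ (((m.val : ℝ) + 1) * θ) (((k : ℝ) + 1 - ((m.val : ℝ) + 1)) * θ)
      rw [show (((m.val : ℝ) + 1) * θ + ((k : ℝ) + 1 - ((m.val : ℝ) + 1)) * θ)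
        = ((k : ℝ) + 1) * θ by ring, ← hDdef] at hkey
      exact alg_diag _ _ _ _ _ _ hDne hkey
    · rw [if_neg (show ¬ i = m by intro h; subst h; omega)]
      simp only [hG]
      rw [min_eq_right (by omega : m.val + 1 ≤ i.val),
        min_eq_right (by omega : m.val + 1 ≤ i.val + 1),
        min_eq_right (by omega : m.val + 1 ≤ i.val + 2),
        max_eq_left (by omega : m.val + 1 ≤ i.val),
        max_eq_left (by omega : m.val + 1 ≤ i.val + 1),
        max_eq_left (by omega : m.val + 1 ≤ i.val + 2)]
      push_cast
      rw [hcos]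
      rw [show ((k : ℝ) + 1 - (i.val : ℝ)) * θ
          = ((k : ℝ) + 1 - ((i.val : ℝ) + 1)) * θ + θ by ring,
        show ((k : ℝ) + 1 - ((i.val : ℝ) + 2)) * θ
          = ((k : ℝ) + 1 - ((i.val : ℝ) + 1)) * θ - θ by ring]
      have hrec := trig_rec θ (((k : ℝ) + 1 - ((i.val : ℝ) + 1)) * θ)
      exact alg_off2 _ _ _ _ _ _ (by linarith)
  refine ⟨Matrix.isUnit_det_of_right_inverse hQR, fun i j => ?_⟩
  rw [Matrix.inv_eq_right_inv hQR]
  simp only [hR]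
  by_cases hij : i.val ≤ j.val
  · rw [abs_of_nonpos (by linarith [(by exact_mod_cast hij : (i.val:ℝ) ≤ j.val)])]
    rw [min_eq_left (by omega), max_eq_right (by omega)]
    push_cast
    rw [show ((k : ℝ) + 1 - -((i.val : ℝ) + 1 - ((j.val : ℝ) + 1))) * θ
        = ((i.val : ℝ) + 1) * θ + ((k : ℝ) - (j.val : ℝ)) * θ by ring,
      show ((k : ℝ) + 1 - ((i.val : ℝ) + 1) - ((j.val : ℝ) + 1)) * θ
        = -((((i.val : ℝ) + 1) * θ) - ((k : ℝ) - (j.val : ℝ)) * θ) by ring,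
      Real.cos_neg, trig_cos]
    rw [show ((k : ℝ) + 1 - ((j.val : ℝ) + 1)) * θ = ((k : ℝ) - (j.val : ℝ)) * θ by ring]
    field_simp
    rw [hDdef, show θ * ((k:ℝ) + 1) = ((k:ℝ)+1)*θ by ring, ← mul_assoc, mul_div_cancel_right₀ _ hT]
  · push_neg at hij
    rw [abs_of_nonneg (by
      have : (j.val : ℝ) ≤ i.val := by exact_mod_cast le_of_lt hij
      linarith)]
    rw [min_eq_right (by omega), max_eq_left (by omega)]
    push_cast
    rw [show ((k : ℝ) + 1 - ((i.val : ℝ) + 1 - ((j.val : ℝ) + 1))) * θ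
        = ((j.val : ℝ) + 1) * θ + ((k : ℝ) - (i.val : ℝ)) * θ by ring,
      show ((k : ℝ) + 1 - ((i.val : ℝ) + 1) - ((j.val : ℝ) + 1)) * θ
        = -((((j.val : ℝ) + 1) * θ) - ((k : ℝ) - (i.val : ℝ)) * θ) by ring,
      Real.cos_neg, trig_cos]
    rw [show ((k : ℝ) + 1 - ((i.val : ℝ) + 1)) * θ = ((k : ℝ) - (i.val : ℝ)) * θ by ring]
    field_simp
    rw [hDdef, show θ * ((k:ℝ) + 1) = ((k:ℝ)+1)*θ by ring, ← mul_assoc, mul_div_cancel_right₀ _ hT]
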